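/- arXiv:2107.02554 — 4 statements merged into one kernel-verified Lean document; each statement's English description precedes it below -/
import Mathlib

section
/- Let G be a bipartite graph with red vertex set R = {r₁,…,r_{n_R}} and blue vertex set B = {b₁,…,b_{n_B}}, and let d ≤ n_R. Define numbers N₁,…,N_{n_R} in base (n_R + 1) with n_B + 1 digits, where the most significant digit of each Nᵢ is 1 and digit j (for j ∈ [n_B]) of Nᵢ is 1 if {rᵢ, b_j} ∈ E(G) and 0 otherwise. Let t be the number whose most significant digit is d and whose remaining n_B digits are all 1. Then G has a set D ⊆ R of size exactly d such that every vertex of B has exactly one neighbor in D, if and only if some subset S of {N₁,…,N_{n_R}} sums to exactly t. -/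
open Finset

private lemma sum_lt_pow' (p : ℕ) (a : ℕ → ℕ) (ha : ∀ j, a j < p) :
    ∀ n, ∑ j ∈ range n, a j * p ^ j < p ^ n := by
  have hp : 1 ≤ p := by have := ha 0; omega
  intro n
  induction n with
  | zero => simp
  | succ n ih =>
    rw [Finset.sum_range_succ, pow_succ]
    have h1 : a n * p ^ n ≤ (p - 1) * p ^ n :=
      Nat.mul_le_mul_right _ (by have := ha n; omega)
    have key : p ^ n + (p - 1) * p ^ n = p ^ n * p := by
      have h : 1 + (p - 1) = p := by omega
      calc p ^ n + (p - 1) * p ^ n = (1 + (p - 1)) * p ^ n := by ring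
        _ = p * p ^ n := by rw [h]
        _ = p ^ n * p := mul_comm _ _
    omega

private lemma digits_unique' (p : ℕ) :
    ∀ (n : ℕ) (a b : ℕ → ℕ), (∀ j, a j < p) → (∀ j, b j < p) →
      (∑ j ∈ range n, a j * p ^ j = ∑ j ∈ range n, b j * p ^ j) →
      ∀ j < n, a j = b j := by
  intro n
  induction n with
  | zero => intro a b _ _ _ j hj; omega
  | succ n ih =>
    intro a b ha hb heq j hj
    have hp : 0 < p := by have := ha 0; omega
    rw [Finset.sum_range_succ', Finset.sum_range_succ'] at heq
    have hA : ∀ (f : ℕ → ℕ), ∑ i ∈ range n, f (i + 1) * p ^ (i + 1)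
        = p * ∑ i ∈ range n, f (i + 1) * p ^ i := by
      intro f
      rw [Finset.mul_sum]
      exact Finset.sum_congr rfl fun i _ => by ring
    rw [hA a, hA b] at heq
    simp only [pow_zero, mul_one] at heq
    have h0 : a 0 = b 0 := by
      have := congrArg (· % p) heq
      simpa [Nat.mul_add_mod, Nat.mod_eq_of_lt (ha 0), Nat.mod_eq_of_lt (hb 0)] using this
    have hAB : ∑ i ∈ range n, a (i + 1) * p ^ i = ∑ i ∈ range n, b (i + 1) * p ^ i := by
      have : p * ∑ i ∈ range n, a (i + 1) * p ^ i
           = p * ∑ i ∈ range n, b (i + 1) * p ^ i := by omega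
      exact Nat.eq_of_mul_eq_mul_left hp this
    rcases j with _ | k
    · exact h0
    · exact ih (fun i => a (i + 1)) (fun i => b (i + 1))
        (fun i => ha _) (fun i => hb _) hAB k (by omega)

private lemma sum_rewrite (nR nB : ℕ) (E : Fin nR → Fin nB → Bool) (S : Finset (Fin nR)) :
    ∑ i ∈ S, ((nR + 1) ^ nB + ∑ j : Fin nB, if E i j then (nR + 1) ^ (j : ℕ) else 0)
      = S.card * (nR + 1) ^ nB
        + ∑ j : Fin nB, (S.filter fun r => E r j = true).card * (nR + 1) ^ (j : ℕ) := by
  rw [Finset.sum_add_distrib, Finset.sum_const, smul_eq_mul, Finset.sum_comm]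
  congr 1
  refine Finset.sum_congr rfl fun j _ => ?_
  rw [← Finset.sum_filter, Finset.sum_const, smul_eq_mul]

/-- The linear-parameter transformation from Exact Red-Blue Dominating Set to
Subset Sum. `E r b` means red vertex `r` is adjacent to blue vertex `b`.
The number `Nᵢ` is `(n_R+1)^{n_B}` (most significant digit 1) plus the incidence digits;
the target `t` has most significant digit `d` and all other digits 1. `G` has an exact
red-blue dominating set of size exactly `d` iff some subset of the numbers sums to `t`. -/
theorem stmt_2 (nR nB d : ℕ) (hd : 0 < d) (hdn : d ≤ nR)
    (E : Fin nR → Fin nB → Bool) :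
    (∃ D : Finset (Fin nR), D.card = d ∧
        ∀ b : Fin nB, (D.filter fun r => E r b = true).card = 1) ↔
    (∃ S : Finset (Fin nR),
        ∑ i ∈ S, ((nR + 1) ^ nB + ∑ j : Fin nB, if E i j then (nR + 1) ^ (j : ℕ) else 0)
          = d * (nR + 1) ^ nB + ∑ j : Fin nB, (nR + 1) ^ (j : ℕ)) := by
  set p := nR + 1 with hp
  constructor
  · rintro ⟨D, hcard, hone⟩
    refine ⟨D, ?_⟩
    rw [sum_rewrite, hcard]
    congr 1
    exact Finset.sum_congr rfl fun j _ => by rw [hone j, one_mul]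
  · rintro ⟨S, hS⟩
    rw [sum_rewrite] at hS
    simp only [← hp] at hS
    set a : ℕ → ℕ := fun j =>
      if h : j < nB then (S.filter fun r => E r ⟨j, h⟩ = true).card else 0 with ha_def
    have hcard_le : ∀ T : Finset (Fin nR), T.card ≤ nR := fun T => by
      simpa using Finset.card_le_univ T
    have ha_lt : ∀ j, a j < p := by
      intro j
      simp only [ha_def]
      split
      · exact lt_of_le_of_lt (le_trans (Finset.card_filter_le _ _) (hcard_le S)) (by omega)
      · omega
    have hb_lt : ∀ _j : ℕ, (1 : ℕ) < p := fun _ => by omega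
    have hXa : ∑ j : Fin nB, (S.filter fun r => E r j = true).card * p ^ (j : ℕ)
        = ∑ j ∈ range nB, a j * p ^ j := by
      rw [← Fin.sum_univ_eq_sum_range (fun j => a j * p ^ j) nB]
      refine Finset.sum_congr rfl fun j _ => ?_
      simp only [ha_def]
      rw [dif_pos j.isLt]
    have hY : ∑ j : Fin nB, p ^ (j : ℕ) = ∑ j ∈ range nB, 1 * p ^ j := by
      rw [← Fin.sum_univ_eq_sum_range (fun j => 1 * p ^ j) nB]
      simp
    rw [hXa, hY] at hS
    have hXlt : ∑ j ∈ range nB, a j * p ^ j < p ^ nB := sum_lt_pow' p a ha_lt nB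
    have hYlt : ∑ j ∈ range nB, 1 * p ^ j < p ^ nB :=
      sum_lt_pow' p (fun _ => 1) hb_lt nB
    have hpow : 0 < p ^ nB := Nat.pow_pos (by omega)
    have hScard : S.card = d := by
      have h1 := congrArg (· / p ^ nB) hS
      simp only [mul_comm _ (p ^ nB)] at h1
      rwa [Nat.mul_add_div hpow, Nat.mul_add_div hpow,
        Nat.div_eq_of_lt hXlt, Nat.div_eq_of_lt hYlt, Nat.add_zero, Nat.add_zero] at h1
    have hXY : ∑ j ∈ range nB, a j * p ^ j = ∑ j ∈ range nB, 1 * p ^ j := by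
      rw [hScard] at hS
      exact Nat.add_left_cancel hS
    have hdig := digits_unique' p nB a (fun _ => 1) ha_lt hb_lt hXY
    refine ⟨S, hScard, fun b => ?_⟩
    have := hdig b b.isLt
    simpa only [ha_def, dif_pos b.isLt, Fin.eta] using this
end

section
/- Let G be a bipartite graph with vertex weights w : V(G) → ℕ₊ and let z : E(G) → ℕ be a maximum w-matching (i.e., z maximizes Σ_{e∈E} z(e) subject to Σ_{e ∋ v} z(e) ≤ w(v) for every vertex v). If z({u,v}) > 0 for some edge {u,v}, then every minimum-weight vertex cover of (G, w) contains exactly one of u and v. -/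
open Finset

variable {V : Type*}

/-- A set of vertices covering every edge. -/
def IsVertexCover (G : SimpleGraph V) (C : Finset V) : Prop :=
  ∀ ⦃u v : V⦄, G.Adj u v → u ∈ C ∨ v ∈ C

/-- A minimum-weight vertex cover for vertex weights `w`. -/
def IsMinVertexCover [Fintype V] (G : SimpleGraph V) (w : V → ℕ) (C : Finset V) : Prop :=
  IsVertexCover G C ∧
    ∀ C' : Finset V, IsVertexCover G C' → ∑ x ∈ C, w x ≤ ∑ x ∈ C', w x

/-- A `w`-matching: an assignment of naturals to edges whose total at each vertex is at
most the vertex weight. -/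
def IsWMatching [Fintype V] [DecidableEq V] (G : SimpleGraph V) [DecidableRel G.Adj]
    (w : V → ℕ) (z : Sym2 V → ℕ) : Prop :=
  ∀ v : V, ∑ e ∈ G.edgeFinset.filter (fun e => v ∈ e), z e ≤ w v

/-- A maximum `w`-matching: a `w`-matching of maximum total value. -/
def IsMaxWMatching [Fintype V] [DecidableEq V] (G : SimpleGraph V) [DecidableRel G.Adj]
    (w : V → ℕ) (z : Sym2 V → ℕ) : Prop :=
  IsWMatching G w z ∧
    ∀ z' : Sym2 V → ℕ, IsWMatching G w z' →
      ∑ e ∈ G.edgeFinset, z' e ≤ ∑ e ∈ G.edgeFinset, z e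

section KoenigAux

set_option linter.unusedSectionVars false

variable [Fintype V] [DecidableEq V] (G : SimpleGraph V) [DecidableRel G.Adj]

/-- The load of `z` at a vertex. -/
def wLoad (z : Sym2 V → ℕ) (v : V) : ℕ :=
  ∑ e ∈ G.edgeFinset.filter (fun e => v ∈ e), z e

lemma isWMatching_iff' (w : V → ℕ) (z : Sym2 V → ℕ) :
    IsWMatching G w z ↔ ∀ v, wLoad G z v ≤ w v := Iff.rfl

lemma sum_ite_add' {s : Finset (Sym2 V)} {z : Sym2 V → ℕ} {e0 : Sym2 V} (he : e0 ∈ s) :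
    (∑ e ∈ s, (if e = e0 then z e + 1 else z e)) = (∑ e ∈ s, z e) + 1 := by
  have h1 : ∑ e ∈ s, (if e = e0 then z e + 1 else z e)
      = (∑ e ∈ s.erase e0, z e) + (z e0 + 1) := by
    rw [← Finset.sum_erase_add _ _ he, if_pos rfl]
    congr 1
    exact Finset.sum_congr rfl fun e heq => if_neg (Finset.ne_of_mem_erase heq)
  have h2 : ∑ e ∈ s, z e = (∑ e ∈ s.erase e0, z e) + z e0 :=
    (Finset.sum_erase_add _ _ he).symm
  omega

lemma sum_ite_sub' {s : Finset (Sym2 V)} {z : Sym2 V → ℕ} {e0 : Sym2 V} (he : e0 ∈ s)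
    (hz : 0 < z e0) :
    (∑ e ∈ s, (if e = e0 then z e - 1 else z e)) + 1 = ∑ e ∈ s, z e := by
  have h1 : ∑ e ∈ s, (if e = e0 then z e - 1 else z e)
      = (∑ e ∈ s.erase e0, z e) + (z e0 - 1) := by
    rw [← Finset.sum_erase_add _ _ he, if_pos rfl]
    congr 1
    exact Finset.sum_congr rfl fun e heq => if_neg (Finset.ne_of_mem_erase heq)
  have h2 : ∑ e ∈ s, z e = (∑ e ∈ s.erase e0, z e) + z e0 :=
    (Finset.sum_erase_add _ _ he).symm
  omega

lemma wLoad_add' (z : Sym2 V → ℕ) (e0 : Sym2 V) (he : e0 ∈ G.edgeFinset) (x : V) :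
    wLoad G (fun e => if e = e0 then z e + 1 else z e) x
      = wLoad G z x + (if x ∈ e0 then 1 else 0) := by
  unfold wLoad
  by_cases hx : x ∈ e0
  · rw [if_pos hx]; exact sum_ite_add' (Finset.mem_filter.mpr ⟨he, hx⟩)
  · rw [if_neg hx, add_zero]
    exact Finset.sum_congr rfl fun e heq =>
      if_neg (fun (h : e = e0) => hx (h ▸ (Finset.mem_filter.mp heq).2))

lemma wLoad_sub' (z : Sym2 V → ℕ) (e0 : Sym2 V) (he : e0 ∈ G.edgeFinset) (hz : 0 < z e0)
    (x : V) :
    wLoad G (fun e => if e = e0 then z e - 1 else z e) x + (if x ∈ e0 then 1 else 0)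
      = wLoad G z x := by
  unfold wLoad
  by_cases hx : x ∈ e0
  · rw [if_pos hx]; exact sum_ite_sub' (Finset.mem_filter.mpr ⟨he, hx⟩) hz
  · rw [if_neg hx, add_zero]
    exact Finset.sum_congr rfl fun e heq =>
      if_neg (fun (h : e = e0) => hx (h ▸ (Finset.mem_filter.mp heq).2))

/-- Moving one unit of `z` from edge `e1` to edge `e2`: effect on loads. -/
lemma wLoad_modify' (z : Sym2 V → ℕ) (e1 e2 : Sym2 V)
    (he1 : e1 ∈ G.edgeFinset) (he2 : e2 ∈ G.edgeFinset) (hz : 0 < z e1) (x : V) :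
    wLoad G (fun e => if e = e2 then (if e = e1 then z e - 1 else z e) + 1
        else (if e = e1 then z e - 1 else z e)) x + (if x ∈ e1 then 1 else 0)
      = wLoad G z x + (if x ∈ e2 then 1 else 0) := by
  have h2 := wLoad_add' G (fun e => if e = e1 then z e - 1 else z e) e2 he2 x
  beta_reduce at h2
  have h1 := wLoad_sub' G z e1 he1 hz x
  omega

lemma sum_modify' (z : Sym2 V → ℕ) (e1 e2 : Sym2 V)
    (he1 : e1 ∈ G.edgeFinset) (he2 : e2 ∈ G.edgeFinset) (hz : 0 < z e1) :
    ∑ e ∈ G.edgeFinset, (if e = e2 then (if e = e1 then z e - 1 else z e) + 1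
        else (if e = e1 then z e - 1 else z e))
      = ∑ e ∈ G.edgeFinset, z e := by
  have h2 := sum_ite_add' (z := fun e => if e = e1 then z e - 1 else z e) he2
  beta_reduce at h2
  have h1 := sum_ite_sub' he1 hz
  omega

/-- Alternating-path reachability from a slack vertex of color `0`, with bounded depth. -/
inductive ReachN (w : V → ℕ) (c : V → Fin 2) (z : Sym2 V → ℕ) : ℕ → V → Prop
  | base (x : V) (h0 : c x = 0) (h1 : wLoad G z x < w x) : ReachN w c z 0 x
  | lift (n : ℕ) (x : V) : ReachN w c z n x → ReachN w c z (n + 1) x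
  | step (n : ℕ) (x x' y : V) : ReachN w c z n x' → G.Adj x' y → G.Adj x y →
      0 < z s(x, y) → c x = 0 → ReachN w c z (n + 1) x

lemma reachN_transfer' (w : V → ℕ) (c : V → Fin 2) (a b0 : V)
    (hca : c a = 0) (hcb0 : c b0 = 1) (z z₂ : Sym2 V → ℕ)
    (hload : ∀ x, c x = 0 → wLoad G z₂ x = wLoad G z x)
    (hmono : ∀ e, e ≠ s(a, b0) → z e ≤ z₂ e) :
    ∀ {n x}, ReachN G w c z n x →
      ReachN G w c z₂ n x ∨ ∃ m, m ≤ n ∧ ReachN G w c z m a := by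
  intro n x h
  induction h with
  | base x h0 h1 => exact Or.inl (ReachN.base x h0 (by rw [hload x h0]; exact h1))
  | lift n x hx IH =>
    rcases IH with h | ⟨m, hm, hma⟩
    · exact Or.inl (ReachN.lift n x h)
    · exact Or.inr ⟨m, hm.trans (Nat.le_succ n), hma⟩
  | step n x x' y hx' h1 h2 hp hcx IH =>
    by_cases he : s(x, y) = s(a, b0)
    · have hxa : x = a := by
        rcases Sym2.eq_iff.mp he with ⟨h, _⟩ | ⟨h, _⟩
        · exact h
        · exfalso; rw [h, hcb0] at hcx; exact absurd hcx (by decide)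
      exact Or.inr ⟨n + 1, le_refl _,
        hxa ▸ ReachN.step n x x' y hx' h1 h2 hp hcx⟩
    · rcases IH with h | ⟨m, hm, hma⟩
      · exact Or.inl (ReachN.step n x x' y h h1 h2
          (lt_of_lt_of_le hp (hmono _ he)) hcx)
      · exact Or.inr ⟨m, hm.trans (Nat.le_succ n), hma⟩

lemma fin_two_cases (i : Fin 2) : i = 0 ∨ i = 1 := by omega

/-- No vertex adjacent to a reachable vertex is slack, when `z` is a maximum matching. -/
lemma noSlack (w : V → ℕ) (c : V → Fin 2) (hc : ∀ {x y : V}, G.Adj x y → c x ≠ c y) :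
    ∀ n (z : Sym2 V → ℕ), IsWMatching G w z →
      (∀ z', IsWMatching G w z' → ∑ e ∈ G.edgeFinset, z' e ≤ ∑ e ∈ G.edgeFinset, z e) →
      ∀ a b, ReachN G w c z n a → G.Adj a b → wLoad G z b < w b → False := by
  intro n
  induction n using Nat.strong_induction_on with
  | _ n ih =>
  intro z hzm hmax a b hreach hadj hslack
  have heb : s(a, b) ∈ G.edgeFinset := by
    rw [SimpleGraph.mem_edgeFinset, SimpleGraph.mem_edgeSet]; exact hadj
  cases hreach with
  | base _ hca hsla =>
    have hkey := wLoad_add' G z (s(a, b)) heb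
    have hsum := sum_ite_add' (z := z) heb
    set zA : Sym2 V → ℕ := fun e => if e = s(a, b) then z e + 1 else z e with hzA
    have hmA : IsWMatching G w zA := by
      rw [isWMatching_iff']
      intro x
      have hk := hkey x
      have hwx := (isWMatching_iff' G w z).mp hzm x
      by_cases hx : x ∈ (s(a, b) : Sym2 V)
      · rcases Sym2.mem_iff.mp hx with rfl | rfl
        · rw [if_pos hx] at hk; omega
        · rw [if_pos hx] at hk; omega
      · rw [if_neg hx] at hk; omega
    have h1 := hmax zA hmA
    simp only [hzA] at h1 hsum
    omega
  | lift m _ h => exact ih m (Nat.lt_succ_self m) z hzm hmax a b h hadj hslack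
  | step m _ a' b0 hr' hadj1 hadj2 hpos hca =>
    by_cases hbb : b = b0
    · subst hbb
      exact ih m (Nat.lt_succ_self m) z hzm hmax a' b hr' hadj1 hslack
    · have hcb0 : c b0 = 1 := by
        rcases fin_two_cases (c b0) with h | h
        · exact absurd (hca.trans h.symm) (hc hadj2)
        · exact h
      have hcb : c b = 1 := by
        rcases fin_two_cases (c b) with h | h
        · exact absurd (hca.trans h.symm) (hc hadj)
        · exact h
      have heb0 : s(a, b0) ∈ G.edgeFinset := by
        rw [SimpleGraph.mem_edgeFinset, SimpleGraph.mem_edgeSet]; exact hadj2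
      have hkey := wLoad_modify' G z (s(a, b0)) (s(a, b)) heb0 heb hpos
      have hsum₂' := sum_modify' G z (s(a, b0)) (s(a, b)) heb0 heb hpos
      set z₂ : Sym2 V → ℕ := fun e => if e = s(a, b) then (if e = s(a, b0) then z e - 1 else z e) + 1
        else (if e = s(a, b0) then z e - 1 else z e) with hz₂def
      have hane0 : a ≠ b0 := hadj2.ne
      have hbmem : ∀ x : V, (x ∈ (s(a, b0) : Sym2 V) ↔ x = a ∨ x = b0) := fun x => Sym2.mem_iff
      have hb2mem : ∀ x : V, (x ∈ (s(a, b) : Sym2 V) ↔ x = a ∨ x = b) := fun x => Sym2.mem_iff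
      have hm₂ : IsWMatching G w z₂ := by
        rw [isWMatching_iff']
        intro x
        have hk := hkey x
        have hwx := (isWMatching_iff' G w z).mp hzm x
        by_cases hx1 : x ∈ (s(a, b0) : Sym2 V) <;> by_cases hx2 : x ∈ (s(a, b) : Sym2 V)
        · rw [if_pos hx1, if_pos hx2] at hk; omega
        · rw [if_pos hx1, if_neg hx2] at hk; omega
        · have hxb : x = b := by
            rcases (hb2mem x).mp hx2 with rfl | rfl
            · exact absurd ((hbmem x).mpr (Or.inl rfl)) hx1
            · rfl
          subst hxb
          rw [if_neg hx1, if_pos hx2] at hk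
          omega
        · rw [if_neg hx1, if_neg hx2] at hk; omega
      have hmax₂ : ∀ z', IsWMatching G w z' →
          ∑ e ∈ G.edgeFinset, z' e ≤ ∑ e ∈ G.edgeFinset, z₂ e := by
        intro z' hz'
        calc ∑ e ∈ G.edgeFinset, z' e ≤ ∑ e ∈ G.edgeFinset, z e := hmax z' hz'
        _ = ∑ e ∈ G.edgeFinset, z₂ e := hsum₂'.symm
      have hslack₂ : wLoad G z₂ b0 < w b0 := by
        have hk := hkey b0
        have hb0m1 : b0 ∈ (s(a, b0) : Sym2 V) := (hbmem b0).mpr (Or.inr rfl)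
        have hb0m2 : b0 ∉ (s(a, b) : Sym2 V) := by
          rw [hb2mem b0]; push_neg; exact ⟨fun h => hane0 h.symm, fun h => hbb h.symm⟩
        rw [if_pos hb0m1, if_neg hb0m2] at hk
        have hwb0 := (isWMatching_iff' G w z).mp hzm b0
        omega
      have hload : ∀ x, c x = 0 → wLoad G z₂ x = wLoad G z x := by
        intro x hcx
        have hk := hkey x
        by_cases hxa : x = a
        · subst hxa
          rw [if_pos ((hbmem x).mpr (Or.inl rfl)), if_pos ((hb2mem x).mpr (Or.inl rfl))] at hk
          omega
        · have hx1 : x ∉ (s(a, b0) : Sym2 V) := by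
            rw [hbmem x]; push_neg
            exact ⟨hxa, fun h => by rw [h, hcb0] at hcx; exact absurd hcx (by decide)⟩
          have hx2 : x ∉ (s(a, b) : Sym2 V) := by
            rw [hb2mem x]; push_neg
            exact ⟨hxa, fun h => by rw [h, hcb] at hcx; exact absurd hcx (by decide)⟩
          rw [if_neg hx1, if_neg hx2] at hk
          omega
      have hmono : ∀ e, e ≠ s(a, b0) → z e ≤ z₂ e := by
        intro e hne
        have hzz : z₂ e = if e = s(a, b) then (if e = s(a, b0) then z e - 1 else z e) + 1
            else (if e = s(a, b0) then z e - 1 else z e) := by rw [hz₂def]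
        rw [hzz, if_neg hne]
        split_ifs <;> omega
      rcases reachN_transfer' G w c a b0 hca hcb0 z z₂ hload hmono hr' with h | ⟨k, hk, hka⟩
      · exact ih m (Nat.lt_succ_self m) z₂ hm₂ hmax₂ a' b0 h hadj1 hslack₂
      · exact ih k (Nat.lt_succ_of_le hk) z hzm hmax a b hka hadj hslack

/-- Double counting: total load over a vertex set. -/
lemma sum_wLoad_eq (z : Sym2 V → ℕ) (D : Finset V) :
    ∑ x ∈ D, wLoad G z x
      = ∑ e ∈ G.edgeFinset, (D.filter (fun x => x ∈ e)).card * z e := by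
  unfold wLoad
  simp_rw [Finset.sum_filter]
  rw [Finset.sum_comm]
  refine Finset.sum_congr rfl fun e _ => ?_
  rw [← Finset.sum_filter, Finset.sum_const, smul_eq_mul]

lemma cover_edge_card {C : Finset V} (hcov : IsVertexCover G C) :
    ∀ e ∈ G.edgeFinset, 0 < (C.filter (fun x => x ∈ e)).card := by
  intro e
  induction e using Sym2.ind with
  | _ x y =>
    intro he
    have hxy : G.Adj x y := by rwa [SimpleGraph.mem_edgeFinset, SimpleGraph.mem_edgeSet] at he
    rcases hcov hxy with h | h
    · exact Finset.card_pos.mpr ⟨x, Finset.mem_filter.mpr ⟨h, by simp⟩⟩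
    · exact Finset.card_pos.mpr ⟨y, Finset.mem_filter.mpr ⟨h, by simp⟩⟩

/-- The value of any `w`-matching is less than the weight of any cover containing both
endpoints of an edge with positive value. -/
lemma matching_lt_cover (w : V → ℕ) (z : Sym2 V → ℕ) (hzm : IsWMatching G w z)
    {C : Finset V} (hcov : IsVertexCover G C) {u v : V} (huv : G.Adj u v)
    (hu : u ∈ C) (hv : v ∈ C) (hpos : 0 < z s(u, v)) :
    ∑ e ∈ G.edgeFinset, z e < ∑ x ∈ C, w x := by
  have heuv : s(u, v) ∈ G.edgeFinset := by
    rw [SimpleGraph.mem_edgeFinset, SimpleGraph.mem_edgeSet]; exact huv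
  have h1 : ∑ x ∈ C, wLoad G z x ≤ ∑ x ∈ C, w x :=
    Finset.sum_le_sum (fun x _ => (isWMatching_iff' G w z).mp hzm x)
  rw [sum_wLoad_eq] at h1
  have h2 : ∀ e ∈ G.edgeFinset,
      z e + (if e = s(u, v) then z e else 0) ≤ (C.filter (fun x => x ∈ e)).card * z e := by
    intro e he
    by_cases heq : e = s(u, v)
    · rw [if_pos heq]
      have hsub : ({u, v} : Finset V) ⊆ C.filter (fun x => x ∈ e) := by
        intro t ht
        rcases Finset.mem_insert.mp ht with rfl | ht
        · exact Finset.mem_filter.mpr ⟨hu, by rw [heq]; simp⟩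
        · rw [Finset.mem_singleton] at ht
          subst ht
          exact Finset.mem_filter.mpr ⟨hv, by rw [heq]; simp⟩
      have hcard2 : 2 ≤ (C.filter (fun x => x ∈ e)).card := by
        calc 2 = ({u, v} : Finset V).card := (Finset.card_pair huv.ne).symm
          _ ≤ _ := Finset.card_le_card hsub
      have := Nat.mul_le_mul_right (z e) hcard2
      omega
    · rw [if_neg heq, add_zero]
      have hc1 := cover_edge_card G hcov e he
      have := Nat.mul_le_mul_right (z e) hc1
      omega
  have h3 := Finset.sum_le_sum h2
  rw [Finset.sum_add_distrib] at h3
  have h4 : ∑ e ∈ G.edgeFinset, (if e = s(u, v) then z e else 0) = z s(u, v) := by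
    rw [Finset.sum_ite_eq' G.edgeFinset (s(u, v)) z, if_pos heuv]
  rw [h4] at h3
  omega

/-- The hard direction of weighted König: some cover has weight at most the value of a
maximum matching. -/
lemma exists_small_cover (w : V → ℕ) (c : V → Fin 2)
    (hc : ∀ {x y : V}, G.Adj x y → c x ≠ c y)
    (z : Sym2 V → ℕ) (hzm : IsWMatching G w z)
    (hmax : ∀ z', IsWMatching G w z' →
      ∑ e ∈ G.edgeFinset, z' e ≤ ∑ e ∈ G.edgeFinset, z e) :
    ∃ C' : Finset V, IsVertexCover G C' ∧ ∑ x ∈ C', w x ≤ ∑ e ∈ G.edgeFinset, z e := by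
  classical
  set R : V → Prop := fun x => ∃ n, ReachN G w c z n x with hR
  set C' : Finset V := Finset.univ.filter
    (fun x => (c x = 0 ∧ ¬ R x) ∨ (c x = 1 ∧ ∃ a, R a ∧ G.Adj a x)) with hC'
  have hmemC' : ∀ x : V, x ∈ C' ↔
      ((c x = 0 ∧ ¬ R x) ∨ (c x = 1 ∧ ∃ a, R a ∧ G.Adj a x)) := by
    intro x
    rw [hC', Finset.mem_filter]
    simp
  have hcov : IsVertexCover G C' := by
    have key : ∀ p q : V, G.Adj p q → c p = 0 → p ∈ C' ∨ q ∈ C' := by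
      intro p q hpq hcp
      have hcq : c q = 1 := by
        rcases fin_two_cases (c q) with h | h
        · exact absurd (hcp.trans h.symm) (hc hpq)
        · exact h
      by_cases hp : R p
      · exact Or.inr ((hmemC' q).mpr (Or.inr ⟨hcq, p, hp, hpq⟩))
      · exact Or.inl ((hmemC' p).mpr (Or.inl ⟨hcp, hp⟩))
    intro x y hxy
    rcases fin_two_cases (c x) with h | h
    · exact key x y hxy h
    · have hcy : c y = 0 := by
        rcases fin_two_cases (c y) with h' | h'
        · exact h'
        · exact absurd (h.trans h'.symm) (hc hxy)
      rcases key y x hxy.symm hcy with h1 | h1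
      · exact Or.inr h1
      · exact Or.inl h1
  have hsat : ∀ x ∈ C', wLoad G z x = w x := by
    intro x hx
    have hle := (isWMatching_iff' G w z).mp hzm x
    rcases (hmemC' x).mp hx with ⟨hcx, hnr⟩ | ⟨hcx, a, ⟨n, hra⟩, hadj⟩
    · by_contra hne
      exact hnr ⟨0, ReachN.base x hcx (lt_of_le_of_ne hle hne)⟩
    · by_contra hne
      exact noSlack G w c hc n z hzm hmax a x hra hadj (lt_of_le_of_ne hle hne)
  -- at most one endpoint of each positive edge lies in C'
  have hcard : ∀ e ∈ G.edgeFinset, (C'.filter (fun x => x ∈ e)).card * z e ≤ z e := by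
    have claim : ∀ x y : V, G.Adj x y → c x = 0 → 0 < z s(x, y) →
        (C'.filter (fun t => t ∈ (s(x, y) : Sym2 V))).card ≤ 1 := by
      intro x y hxy hcx hz0
      by_cases hxC : x ∈ C'
      · have hnrx : ¬ R x := by
          rcases (hmemC' x).mp hxC with ⟨_, hnr⟩ | ⟨hc1, _⟩
          · exact hnr
          · rw [hcx] at hc1; exact absurd hc1 (by decide)
        have hsub : C'.filter (fun t => t ∈ (s(x, y) : Sym2 V)) ⊆ {x} := by
          intro t ht
          obtain ⟨htC, hte⟩ := Finset.mem_filter.mp ht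
          rcases Sym2.mem_iff.mp hte with rfl | rfl
          · exact Finset.mem_singleton_self t
          · exfalso
            rcases (hmemC' t).mp htC with ⟨hc0, _⟩ | ⟨_, a, ⟨n, hra⟩, hadj⟩
            · have : c t = 1 := by
                rcases fin_two_cases (c t) with h | h
                · exact absurd (hcx.trans h.symm) (hc hxy)
                · exact h
              rw [this] at hc0; exact absurd hc0 (by decide)
            · exact hnrx ⟨n + 1, ReachN.step n x a t hra hadj hxy hz0 hcx⟩
        calc (C'.filter (fun t => t ∈ (s(x, y) : Sym2 V))).card
            ≤ ({x} : Finset V).card := Finset.card_le_card hsub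
          _ = 1 := Finset.card_singleton x
      · have hsub : C'.filter (fun t => t ∈ (s(x, y) : Sym2 V)) ⊆ {y} := by
          intro t ht
          obtain ⟨htC, hte⟩ := Finset.mem_filter.mp ht
          rcases Sym2.mem_iff.mp hte with rfl | rfl
          · exact absurd htC hxC
          · exact Finset.mem_singleton_self t
        calc (C'.filter (fun t => t ∈ (s(x, y) : Sym2 V))).card
            ≤ ({y} : Finset V).card := Finset.card_le_card hsub
          _ = 1 := Finset.card_singleton y
    intro e
    induction e using Sym2.ind with
    | _ x y =>
      intro he
      have hxy : G.Adj x y := by rwa [SimpleGraph.mem_edgeFinset, SimpleGraph.mem_edgeSet] at he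
      by_cases hz0 : z s(x, y) = 0
      · rw [hz0]; simp
      · have hz0' : 0 < z s(x, y) := Nat.pos_of_ne_zero hz0
        have hc1 : (C'.filter (fun t => t ∈ (s(x, y) : Sym2 V))).card ≤ 1 := by
          rcases fin_two_cases (c x) with h | h
          · exact claim x y hxy h hz0'
          · have hcy : c y = 0 := by
              rcases fin_two_cases (c y) with h' | h'
              · exact h'
              · exact absurd (h.trans h'.symm) (hc hxy)
            have := claim y x hxy.symm hcy (by rwa [Sym2.eq_swap])
            rwa [Sym2.eq_swap] at this
        have := Nat.mul_le_mul_right (z s(x, y)) hc1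
        omega
  refine ⟨C', hcov, ?_⟩
  have h1 : ∑ x ∈ C', w x = ∑ x ∈ C', wLoad G z x :=
    Finset.sum_congr rfl (fun x hx => (hsat x hx).symm)
  rw [h1, sum_wLoad_eq]
  calc ∑ e ∈ G.edgeFinset, (C'.filter (fun x => x ∈ e)).card * z e
      ≤ ∑ e ∈ G.edgeFinset, z e := Finset.sum_le_sum hcard

end KoenigAux

/-- If a maximum `w`-matching of a bipartite graph puts positive value on the
edge `{u,v}`, then every minimum-weight vertex cover contains exactly one of `u`, `v`. -/
theorem stmt_3 [Fintype V] [DecidableEq V] (G : SimpleGraph V) [DecidableRel G.Adj]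
    (hbip : G.Colorable 2) (w : V → ℕ) (hw : ∀ v, 0 < w v)
    (z : Sym2 V → ℕ) (hz : IsMaxWMatching G w z)
    (u v : V) (huv : G.Adj u v) (hpos : 0 < z s(u, v))
    (C : Finset V) (hC : IsMinVertexCover G w C) :
    (u ∈ C ∧ v ∉ C) ∨ (u ∉ C ∧ v ∈ C) := by
  classical
  obtain ⟨col⟩ := hbip
  have hc : ∀ {x y : V}, G.Adj x y → col x ≠ col y := fun h => col.valid h
  have hone := hC.1 huv
  have hnot : ¬ (u ∈ C ∧ v ∈ C) := by
    rintro ⟨hu, hv⟩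
    obtain ⟨C', hcov', hle'⟩ := exists_small_cover G w (fun x => col x) hc z hz.1 hz.2
    have hmin := hC.2 C' hcov'
    have hstrict := matching_lt_cover G w z hz.1 hC.1 huv hu hv hpos
    omega
  tauto
end

section
/- Let n ≥ 1, let G_n be the bipartite perfect-matching graph on v₁,…,v_{n+1}, v′₁,…,v′_{n+1} with edges {vᵢ, v′ᵢ}. Given an integer weight vector w ∈ ℤ^n and threshold t ∈ ℤ, let c = |min(min_i w[i], t)| + 1 and define h_{w,t}(vᵢ) = w[i] + c for i ≤ n, h_{w,t}(v_{n+1}) = t + c, and h_{w,t}(v′ᵢ) = c for all i. If (w_f, t_f) and (w_g, t_g) induce distinct n-bit threshold functions, then h_{w_f,t_f} and h_{w_g,t_g} are not vertex-cover equivalent on G_n: there are inclusion-minimal vertex covers S₁, S₂ of G_n with h_{w_f,t_f}(S₁) ≤ h_{w_f,t_f}(S₂) but h_{w_g,t_g}(S₁) > h_{w_g,t_g}(S₂), or vice versa. -/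
open Finset

variable {V : Type*}

/-- An inclusion-minimal vertex cover. -/
def MinimalVC (G : SimpleGraph V) (C : Finset V) : Prop :=
  IsVertexCover G C ∧ ∀ C' : Finset V, C' ⊂ C → ¬ IsVertexCover G C'

/-- The perfect-matching graph on `vᵢ = (i, false)`, `v′ᵢ = (i, true)`. -/
def Gm (n : ℕ) : SimpleGraph (Fin (n + 1) × Bool) where
  Adj u v := u.1 = v.1 ∧ u.2 ≠ v.2
  symm := ⟨fun u v ⟨h1, h2⟩ => ⟨h1.symm, h2.symm⟩⟩
  loopless := ⟨fun u ⟨_, h⟩ => h rfl⟩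

/-- The weight function `h_{w,t}`: with `c = |min(minᵢ w[i], t)| + 1`, vertex `vᵢ` gets
`w[i] + c` (for `i ≤ n`), `v_{n+1}` gets `t + c`, and every `v′ᵢ` gets `c`. -/
def hwt (n : ℕ) (w : Fin n → ℤ) (t : ℤ) : Fin (n + 1) × Bool → ℤ :=
  fun p =>
    let c : ℤ := ((Finset.univ.fold min t w).natAbs : ℤ) + 1
    if p.2 = true then c
    else if h : (p.1 : ℕ) < n then w ⟨p.1, h⟩ + c
    else t + c

lemma minvc (n : ℕ) (b : Fin (n+1) → Bool) :
    MinimalVC (Gm n) ((Finset.univ : Finset (Fin (n+1))).image (fun i => (i, b i))) := by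
  constructor
  · rintro ⟨i, x⟩ ⟨j, y⟩ ⟨h1, h2⟩
    simp only at h1 h2
    subst h1
    by_cases hx : x = b i
    · left; simp [Finset.mem_image, hx]
    · right; simp only [Finset.mem_image, Finset.mem_univ, true_and, Prod.mk.injEq]
      refine ⟨i, rfl, ?_⟩
      cases x <;> cases y <;> cases hb : b i <;> simp_all
  · intro C' hC' hcov
    obtain ⟨x, hxC, hxC'⟩ := Finset.exists_of_ssubset hC'
    simp only [Finset.mem_image, Finset.mem_univ, true_and] at hxC
    obtain ⟨i, rfl⟩ := hxC
    have hadj : (Gm n).Adj (i, b i) (i, !b i) := ⟨rfl, by cases b i <;> simp⟩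
    rcases hcov hadj with h | h
    · exact hxC' h
    · have := hC'.subset h
      simp only [Finset.mem_image, Finset.mem_univ, true_and] at this
      obtain ⟨j, hj⟩ := this
      have : j = i := congrArg Prod.fst hj
      subst this
      have := congrArg Prod.snd hj
      simp at this

lemma sum_img (n : ℕ) (w : Fin n → ℤ) (t : ℤ) (b : Fin (n+1) → Bool) :
    ∑ v ∈ (Finset.univ : Finset (Fin (n+1))).image (fun i => (i, b i)), hwt n w t v =
      ∑ i : Fin (n+1), hwt n w t (i, b i) := by
  rw [Finset.sum_image]
  intro i _ j _ h
  exact congrArg Prod.fst h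

/-- If `(w_f, t_f)` and `(w_g, t_g)` induce distinct `n`-bit threshold
functions, then `h_{w_f,t_f}` and `h_{w_g,t_g}` are not vertex-cover equivalent on `G_n`:
some pair of inclusion-minimal vertex covers is ordered differently by the two weights. -/
theorem stmt_10 (n : ℕ) (hn : 1 ≤ n) (wf wg : Fin n → ℤ) (tf tg : ℤ)
    (hdist : ∃ X : Fin n → Bool,
        ¬ ((tf ≤ ∑ i, wf i * (if X i then 1 else 0)) ↔
           (tg ≤ ∑ i, wg i * (if X i then 1 else 0)))) :
    ∃ S₁ S₂ : Finset (Fin (n + 1) × Bool),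
      MinimalVC (Gm n) S₁ ∧ MinimalVC (Gm n) S₂ ∧
      ¬ ((∑ v ∈ S₁, hwt n wf tf v ≤ ∑ v ∈ S₂, hwt n wf tf v) ↔
         (∑ v ∈ S₁, hwt n wg tg v ≤ ∑ v ∈ S₂, hwt n wg tg v)) := by
  obtain ⟨X, hX⟩ := hdist
  set b₁ : Fin (n+1) → Bool := fun i => decide ((i:ℕ) < n) with hb1
  set b₂ : Fin (n+1) → Bool := fun i => if h : (i:ℕ) < n then !X ⟨i, h⟩ else true with hb2
  refine ⟨_, _, minvc n b₁, minvc n b₂, ?_⟩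
  have key : ∀ (w : Fin n → ℤ) (t : ℤ),
      ((∑ v ∈ (Finset.univ.image fun i => (i, b₁ i)), hwt n w t v ≤
       ∑ v ∈ (Finset.univ.image fun i => (i, b₂ i)), hwt n w t v) ↔
      (t ≤ ∑ i, w i * (if X i then 1 else 0))) := by
    intro w t
    rw [sum_img, sum_img]
    set c : ℤ := ((Finset.univ.fold min t w).natAbs : ℤ) + 1 with hc
    have h1 : ∑ i : Fin (n+1), hwt n w t (i, b₁ i) = t + (n+1) * c := by
      rw [Fin.sum_univ_castSucc]
      have hlast : hwt n w t (Fin.last n, b₁ (Fin.last n)) = t + c := by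
        simp [hwt, hb1, hc]
      have hcs : ∀ i : Fin n, hwt n w t (i.castSucc, b₁ i.castSucc) = c := by
        intro i; simp [hwt, hb1, i.isLt, hc]
      rw [hlast, Finset.sum_congr rfl (fun i _ => hcs i)]
      simp only [Finset.sum_const, Finset.card_univ, Fintype.card_fin, nsmul_eq_mul]
      push_cast; ring
    have h2 : ∑ i : Fin (n+1), hwt n w t (i, b₂ i) =
        (∑ i, w i * (if X i then 1 else 0)) + (n+1) * c := by
      rw [Fin.sum_univ_castSucc]
      have hlast : hwt n w t (Fin.last n, b₂ (Fin.last n)) = c := by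
        simp [hwt, hb2, hc]
      have hcs : ∀ i : Fin n, hwt n w t (i.castSucc, b₂ i.castSucc) =
          w i * (if X i then 1 else 0) + c := by
        intro i
        cases hXi : X i <;> simp [hwt, hb2, i.isLt, hXi, hc, Fin.eta]
      rw [hlast, Finset.sum_congr rfl (fun i _ => hcs i), Finset.sum_add_distrib]
      simp only [Finset.sum_const, Finset.card_univ, Fintype.card_fin, nsmul_eq_mul]
      push_cast; ring
    rw [h1, h2]
    constructor <;> intro h <;> linarith
  rw [key wf tf, key wg tg]
  exact hX
end

section
/- Let G be a d-uniform hypergraph with nonnegative integer hyperedge weights w and target t, and let W = Σ_{e∈E(G)} w(e) with 0 ≤ t ≤ W. Construct a weighted formula Φ over Boolean variables V(G) containing, for each d-element subset e = {v₁,…,v_d} of V(G), the constraint AND_d(v₁,…,v_d) with weight w(e) if e ∈ E(G) and weight W+1 if e ∉ E(G). Then there is a hyperclique X ⊆ V(G) with total hyperedge weight exactly t if and only if there is an assignment x : V(G) → {0,1} such that the total weight of satisfied constraints Φ(x) equals t. -/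
open Finset

lemma stmt12_aux {V : Type*} [Fintype V] [DecidableEq V]
    (d : ℕ) (E : Finset (Finset V)) (hE : ∀ e ∈ E, e.card = d)
    (X : Finset V) (hX : ∀ e ∈ X.powersetCard d, e ∈ E) :
    (Finset.univ.powersetCard d).filter (· ⊆ X) = E.filter (· ⊆ X) := by
  ext e
  simp only [mem_filter, mem_powersetCard]
  constructor
  · rintro ⟨⟨-, hc⟩, hs⟩
    exact ⟨hX e (mem_powersetCard.2 ⟨hs, hc⟩), hs⟩
  · rintro ⟨he, hs⟩
    exact ⟨⟨subset_univ e, hE e he⟩, hs⟩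

/-- Equivalence between Exact-Edge-Weight `d`-Uniform Hyperclique and the
weighted CSP over `AND_d` constraints: hyperedges keep their weight, non-hyperedge
`d`-subsets get the forbidden weight `W + 1`. There is a hyperclique of total weight `t`
iff some Boolean assignment satisfies constraints of total weight exactly `t`. -/
theorem stmt_12 {V : Type*} [Fintype V] [DecidableEq V]
    (d : ℕ) (hd : 1 ≤ d)
    (E : Finset (Finset V)) (hE : ∀ e ∈ E, e.card = d)
    (w : Finset V → ℕ) (t : ℕ) (ht : t ≤ ∑ e ∈ E, w e) :
    (∃ X : Finset V, (∀ e ∈ X.powersetCard d, e ∈ E) ∧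
        ∑ e ∈ E.filter (· ⊆ X), w e = t) ↔
    (∃ x : V → Bool,
        ∑ e ∈ (Finset.univ.powersetCard d).filter
            (· ⊆ Finset.univ.filter (fun v => x v = true)),
          (if e ∈ E then w e else (∑ e' ∈ E, w e') + 1) = t) := by
  constructor
  · rintro ⟨X, hX, hsum⟩
    refine ⟨fun v => v ∈ X, ?_⟩
    have hset : Finset.univ.filter (fun v => (decide (v ∈ X)) = true) = X := by
      ext v; simp
    rw [hset, stmt12_aux d E hE X hX, ← hsum]
    apply Finset.sum_congr rfl
    intro e he
    rw [if_pos (mem_filter.1 he).1]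
  · rintro ⟨x, hsum⟩
    set X := Finset.univ.filter (fun v => x v = true) with hXdef
    have hX : ∀ e ∈ X.powersetCard d, e ∈ E := by
      intro e he
      by_contra hne
      have hmem : e ∈ (Finset.univ.powersetCard d).filter (· ⊆ X) := by
        rw [mem_powersetCard] at he
        simp only [mem_filter, mem_powersetCard]
        exact ⟨⟨subset_univ e, he.2⟩, he.1⟩
      have hle : (∑ e' ∈ E, w e') + 1 ≤
          ∑ e ∈ (Finset.univ.powersetCard d).filter (· ⊆ X),
            (if e ∈ E then w e else (∑ e' ∈ E, w e') + 1) := by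
        calc (∑ e' ∈ E, w e') + 1
            = (if e ∈ E then w e else (∑ e' ∈ E, w e') + 1) := by rw [if_neg hne]
          _ ≤ _ := Finset.single_le_sum (f := fun e => if e ∈ E then w e else (∑ e' ∈ E, w e') + 1) (fun _ _ => Nat.zero_le _) hmem
      omega
    refine ⟨X, hX, ?_⟩
    rw [← stmt12_aux d E hE X hX, ← hsum]
    apply Finset.sum_congr rfl
    intro e he
    rw [stmt12_aux d E hE X hX] at he
    rw [if_pos (mem_filter.1 he).1]
end
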